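/- Let (X,P) be a Markov chain on a countable set, Y ⊆ X a recurrent subset, and Q the induced walk on Y. If h is a bounded Q-harmonic function on Y, then the function h̃ on X defined by h̃(x) = E_x[h(Z_{τ₀})] = Σ_{y∈Y} α(x,y) h(y), where α(x,y) = P_x(Z_{τ₀} = y) and τ₀ is the first hitting time of Y, is a bounded P-harmonic function on X extending h. -/

import Mathlib

open scoped Classical

noncomputable section

variable {X : Type*}

/-- A transition matrix: nonnegative entries and each row sums to 1. -/
def IsMarkov (p : X → X → ℝ) : Prop :=
  (∀ x y, 0 ≤ p x y) ∧ ∀ x, HasSum (p x) 1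

/-- `n`-step transition probabilities. -/
noncomputable def stepPow (p : X → X → ℝ) : ℕ → X → X → ℝ
  | 0, x, y => if x = y then 1 else 0
  | n + 1, x, y => ∑' z, p x z * stepPow p n z y

/-- Irreducibility of the chain. -/
def ChainIrreducible (p : X → X → ℝ) : Prop :=
  ∀ x y, ∃ n, 0 < stepPow p n x y

/-- `alphaHit p Y n x y` is the probability, starting at `x`, that the walk first meets `Y`
at time `n` (times `≥ 0`), and does so at the point `y`.  (This is the distribution of
`Z_{τ₀}` together with the value of `τ₀`.) -/
noncomputable def alphaHit (p : X → X → ℝ) (Y : Set X) : ℕ → X → X → ℝ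
  | 0, x, y => if x = y ∧ x ∈ Y then 1 else 0
  | n + 1, x, y => if x ∈ Y then 0 else ∑' z, p x z * alphaHit p Y n z y

/-- Probability, starting at `x`, that the walk first meets `Y` at a time `≥ 1`, that this
first meeting time equals `n + 1`, and that the meeting point is `y`
(distribution of `Z_{τ₁}` for a start in `Y`, resp. of the first entrance after time `0`). -/
noncomputable def firstHit (p : X → X → ℝ) (Y : Set X) (n : ℕ) (x y : X) : ℝ :=
  ∑' z, p x z * alphaHit p Y n z y

/-- The induced chain on `Y`: `q x y = P_x(Z_{τ₁} = y)`. -/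
noncomputable def inducedQ (p : X → X → ℝ) (Y : Set X) (x y : X) : ℝ :=
  ∑' n, firstHit p Y n x y

/-- `Y` is recurrent: from every starting point, the walk almost surely meets `Y`. -/
def RecurrentSet (p : X → X → ℝ) (Y : Set X) : Prop :=
  ∀ x, ∑' y, (∑' n, alphaHit p Y n x y) = 1

/-- The harmonic extension of a function on `Y` to all of `X`, via the distribution of the
first entrance point `Z_{τ₀}` of `Y`:  `h̃(x) = E_x[h(Z_{τ₀})] = Σ_{y ∈ Y} α(x,y) h(y)`. -/
noncomputable def harmonicExt (p : X → X → ℝ) (Y : Set X) (h : X → ℝ) (x : X) : ℝ :=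
  ∑' y, (∑' n, alphaHit p Y n x y) * h y

open scoped ENNReal

namespace HarmAux

variable (p : X → X → ℝ) (Y : Set X)

/-- `ENNReal` version of `p`. -/
noncomputable def pE (x y : X) : ℝ≥0∞ := ENNReal.ofReal (p x y)

/-- `ENNReal` version of `alphaHit`. -/
noncomputable def AE : ℕ → X → X → ℝ≥0∞
  | 0, x, y => if x = y ∧ x ∈ Y then 1 else 0
  | n + 1, x, y => if x ∈ Y then 0 else ∑' z, pE p x z * AE n z y

noncomputable def alE (x y : X) : ℝ≥0∞ := ∑' n, AE p Y n x y

noncomputable def qE (x y : X) : ℝ≥0∞ := ∑' z, pE p x z * alE p Y z y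

lemma pE_ne_top (x y : X) : pE p x y ≠ ⊤ := ENNReal.ofReal_ne_top

lemma pE_sum (hp : IsMarkov p) (x : X) : ∑' y, pE p x y = 1 := by
  have h1 := (hp.2 x).tsum_eq
  have h2 := ENNReal.ofReal_tsum_of_nonneg (hp.1 x) (hp.2 x).summable
  rw [h1] at h2
  simpa [pE] using h2.symm

lemma AE_le_one (hp : IsMarkov p) : ∀ (n : ℕ) (x y : X), AE p Y n x y ≤ 1 := by
  intro n
  induction n with
  | zero => intro x y; rw [AE]; split <;> simp
  | succ n ih =>
    intro x y
    rw [AE]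
    split
    · simp
    · calc ∑' z, pE p x z * AE p Y n z y
          ≤ ∑' z, pE p x z * 1 :=
            ENNReal.tsum_le_tsum fun z => mul_le_mul_right (ih z y) _
        _ = 1 := by simpa using pE_sum p hp x

lemma AE_ne_top (hp : IsMarkov p) (n : ℕ) (x y : X) : AE p Y n x y ≠ ⊤ :=
  ((AE_le_one p Y hp n x y).trans_lt ENNReal.one_lt_top).ne

lemma AE_toReal (hp : IsMarkov p) :
    ∀ (n : ℕ) (x y : X), (AE p Y n x y).toReal = alphaHit p Y n x y := by
  intro n
  induction n with
  | zero => intro x y; rw [AE, alphaHit]; split <;> simp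
  | succ n ih =>
    intro x y
    rw [AE, alphaHit]
    split
    · simp
    · rw [ENNReal.tsum_toReal_eq fun z =>
        ENNReal.mul_ne_top (pE_ne_top p x z) (AE_ne_top p Y hp n z y)]
      exact tsum_congr fun z => by
        rw [ENNReal.toReal_mul, ih, pE, ENNReal.toReal_ofReal (hp.1 x z)]

lemma AE_zero_right (hy : y ∉ Y) : ∀ (n : ℕ) (x : X), AE p Y n x y = 0 := by
  intro n
  induction n with
  | zero =>
    intro x; rw [AE, if_neg]; rintro ⟨rfl, hx⟩; exact hy hx
  | succ n ih =>
    intro x; rw [AE]; split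
    · rfl
    · simp [ih]

lemma alE_zero_right (hy : y ∉ Y) (x : X) : alE p Y x y = 0 := by
  simp [alE, AE_zero_right p Y hy]

lemma sumN_le_one (hp : IsMarkov p) :
    ∀ (N : ℕ) (x : X), ∑ n ∈ Finset.range N, ∑' y, AE p Y n x y ≤ 1 := by
  intro N
  induction N with
  | zero => intro x; simp
  | succ N ih =>
    intro x
    rw [Finset.sum_range_succ']
    by_cases hx : x ∈ Y
    · have h0 : ∑' y, AE p Y 0 x y = 1 := by
        rw [tsum_eq_single x fun y hy => ?_]
        · rw [AE, if_pos ⟨rfl, hx⟩]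
        · rw [AE, if_neg]; rintro ⟨rfl, -⟩; exact hy rfl
      have hs : ∀ n : ℕ, ∑' y, AE p Y (n + 1) x y = 0 := fun n => by
        simp [AE, hx]
      simp [h0, hs]
    · have h0 : ∑' y, AE p Y 0 x y = 0 := by
        refine ENNReal.tsum_eq_zero.mpr fun y => ?_
        rw [AE, if_neg]; rintro ⟨rfl, h⟩; exact hx h
      have key : ∀ n : ℕ, ∑' y, AE p Y (n + 1) x y
          = ∑' z, pE p x z * ∑' y, AE p Y n z y := fun n => by
        simp only [AE, if_neg hx]
        rw [ENNReal.tsum_comm]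
        exact tsum_congr fun z => ENNReal.tsum_mul_left
      calc (∑ n ∈ Finset.range N, ∑' y, AE p Y (n + 1) x y) + ∑' y, AE p Y 0 x y
          = ∑ n ∈ Finset.range N, ∑' z, pE p x z * ∑' y, AE p Y n z y := by
            rw [h0, add_zero]; exact Finset.sum_congr rfl fun n _ => key n
        _ = ∑' z, ∑ n ∈ Finset.range N, pE p x z * ∑' y, AE p Y n z y :=
            (Summable.tsum_finsetSum fun i _ => ENNReal.summable).symm
        _ = ∑' z, pE p x z * ∑ n ∈ Finset.range N, ∑' y, AE p Y n z y :=
            tsum_congr fun z => (Finset.mul_sum _ _ _).symm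
        _ ≤ ∑' z, pE p x z * 1 :=
            ENNReal.tsum_le_tsum fun z => mul_le_mul_right (ih z) _
        _ = 1 := by simpa using pE_sum p hp x

lemma alE_total_le (hp : IsMarkov p) (x : X) : ∑' y, alE p Y x y ≤ 1 := by
  rw [show ∑' y, alE p Y x y = ∑' n, ∑' y, AE p Y n x y from ENNReal.tsum_comm,
    ENNReal.tsum_eq_iSup_nat]
  exact iSup_le fun N => sumN_le_one p Y hp N x

lemma alE_le_one (hp : IsMarkov p) (x y : X) : alE p Y x y ≤ 1 :=
  (ENNReal.le_tsum y).trans (alE_total_le p Y hp x)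

lemma alE_ne_top (hp : IsMarkov p) (x y : X) : alE p Y x y ≠ ⊤ :=
  ((alE_le_one p Y hp x y).trans_lt ENNReal.one_lt_top).ne

lemma alE_toReal (hp : IsMarkov p) (x y : X) :
    (alE p Y x y).toReal = ∑' n, alphaHit p Y n x y := by
  rw [alE, ENNReal.tsum_toReal_eq fun n => AE_ne_top p Y hp n x y]
  exact tsum_congr fun n => AE_toReal p Y hp n x y

lemma alE_total (hp : IsMarkov p) (hrec : RecurrentSet p Y) (x : X) :
    ∑' y, alE p Y x y = 1 := by
  have hle := alE_total_le p Y hp x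
  have hne : ∑' y, alE p Y x y ≠ ⊤ := (hle.trans_lt ENNReal.one_lt_top).ne
  have ht : (∑' y, alE p Y x y).toReal = 1 := by
    rw [ENNReal.tsum_toReal_eq fun y => alE_ne_top p Y hp x y,
      tsum_congr fun y => alE_toReal p Y hp x y]
    exact hrec x
  rw [← ENNReal.ofReal_toReal hne, ht, ENNReal.ofReal_one]

lemma alE_not_mem {x : X} (hx : x ∉ Y) (y : X) : alE p Y x y = qE p Y x y := by
  rw [alE, tsum_eq_zero_add' ENNReal.summable]
  have h0 : AE p Y 0 x y = 0 := by
    rw [AE, if_neg]; rintro ⟨rfl, h⟩; exact hx h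
  rw [h0, zero_add, qE]
  simp only [AE, if_neg hx]
  rw [ENNReal.tsum_comm]
  exact tsum_congr fun z => ENNReal.tsum_mul_left

lemma qE_le_one (hp : IsMarkov p) (x y : X) : qE p Y x y ≤ 1 := by
  calc qE p Y x y ≤ ∑' z, pE p x z * 1 :=
        ENNReal.tsum_le_tsum fun z => mul_le_mul_right (alE_le_one p Y hp z y) _
    _ = 1 := by simpa using pE_sum p hp x

lemma qE_ne_top (hp : IsMarkov p) (x y : X) : qE p Y x y ≠ ⊤ :=
  ((qE_le_one p Y hp x y).trans_lt ENNReal.one_lt_top).ne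

lemma qE_total (hp : IsMarkov p) (hrec : RecurrentSet p Y) (x : X) :
    ∑' y, qE p Y x y = 1 := by
  have h1 : ∑' y, qE p Y x y = ∑' z, pE p x z * ∑' y, alE p Y z y := by
    simp only [qE]
    rw [ENNReal.tsum_comm]
    exact tsum_congr fun z => ENNReal.tsum_mul_left
  rw [h1]
  calc ∑' z, pE p x z * ∑' y, alE p Y z y
      = ∑' z, pE p x z := by
        exact tsum_congr fun z => by rw [alE_total p Y hp hrec z, mul_one]
    _ = 1 := pE_sum p hp x

lemma qE_toReal (hp : IsMarkov p) (x y : X) :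
    (qE p Y x y).toReal = inducedQ p Y x y := by
  have hswap : qE p Y x y = ∑' n, ∑' z, pE p x z * AE p Y n z y := by
    rw [qE, ← ENNReal.tsum_comm]
    exact tsum_congr fun z => by rw [alE, ENNReal.tsum_mul_left]
  have hfin : ∀ n : ℕ, (∑' z, pE p x z * AE p Y n z y) ≠ ⊤ := fun n => by
    refine ((ENNReal.tsum_le_tsum fun z => mul_le_mul_right
      (AE_le_one p Y hp n z y) (pE p x z)).trans_lt ?_).ne
    simp [pE_sum p hp x]
  rw [hswap, ENNReal.tsum_toReal_eq hfin, inducedQ]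
  refine tsum_congr fun n => ?_
  rw [ENNReal.tsum_toReal_eq fun z =>
    ENNReal.mul_ne_top (pE_ne_top p x z) (AE_ne_top p Y hp n z y), firstHit]
  exact tsum_congr fun z => by
    rw [ENNReal.toReal_mul, AE_toReal p Y hp, pE, ENNReal.toReal_ofReal (hp.1 x z)]

lemma qE_zero_right (hy : y ∉ Y) (x : X) : qE p Y x y = 0 := by
  simp [qE, alE_zero_right p Y hy]


section Nonneg

variable (g : X → ℝ)

/-- `ENNReal` harmonic extension of a nonnegative function. -/
noncomputable def HE (x : X) : ℝ≥0∞ := ∑' y, alE p Y x y * ENNReal.ofReal (g y)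

lemma HE_le (hp : IsMarkov p) (hrec : RecurrentSet p Y) {C' : ℝ}
    (hgC : ∀ y ∈ Y, g y ≤ C') (x : X) : HE p Y g x ≤ ENNReal.ofReal C' := by
  calc HE p Y g x ≤ ∑' y, alE p Y x y * ENNReal.ofReal C' := by
        refine ENNReal.tsum_le_tsum fun y => ?_
        by_cases hy : y ∈ Y
        · exact mul_le_mul_right (ENNReal.ofReal_le_ofReal (hgC y hy)) _
        · simp [alE_zero_right p Y hy]
    _ = ENNReal.ofReal C' := by
        rw [ENNReal.tsum_mul_right, alE_total p Y hp hrec x, one_mul]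

lemma HE_ne_top (hp : IsMarkov p) (hrec : RecurrentSet p Y) {C' : ℝ}
    (hgC : ∀ y ∈ Y, g y ≤ C') (x : X) : HE p Y g x ≠ ⊤ :=
  ((HE_le p Y g hp hrec hgC x).trans_lt ENNReal.ofReal_lt_top).ne

lemma harmonicExt_eq_toReal (hp : IsMarkov p) (hg : ∀ y, 0 ≤ g y) (x : X) :
    harmonicExt p Y g x = (HE p Y g x).toReal := by
  rw [HE, ENNReal.tsum_toReal_eq fun y =>
    ENNReal.mul_ne_top (alE_ne_top p Y hp x y) ENNReal.ofReal_ne_top, harmonicExt]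
  exact tsum_congr fun y => by
    rw [ENNReal.toReal_mul, alE_toReal p Y hp, ENNReal.toReal_ofReal (hg y)]

lemma key_ennreal (x : X) :
    ∑' z, pE p x z * HE p Y g z = ∑' y, qE p Y x y * ENNReal.ofReal (g y) := by
  calc ∑' z, pE p x z * HE p Y g z
      = ∑' z, ∑' y, pE p x z * (alE p Y z y * ENNReal.ofReal (g y)) :=
        tsum_congr fun z => by rw [HE, ENNReal.tsum_mul_left]
    _ = ∑' y, ∑' z, pE p x z * (alE p Y z y * ENNReal.ofReal (g y)) := ENNReal.tsum_comm
    _ = ∑' y, qE p Y x y * ENNReal.ofReal (g y) := tsum_congr fun y => by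
        simp only [← mul_assoc]
        rw [ENNReal.tsum_mul_right, qE]

lemma key_real (hp : IsMarkov p) (hrec : RecurrentSet p Y) (hg : ∀ y, 0 ≤ g y)
    {C' : ℝ} (hgC : ∀ y ∈ Y, g y ≤ C') (x : X) :
    ∑' y, p x y * harmonicExt p Y g y = ∑' y, inducedQ p Y x y * g y := by
  have h1 : ∀ y, p x y * harmonicExt p Y g y = (pE p x y * HE p Y g y).toReal := fun y => by
    rw [ENNReal.toReal_mul, harmonicExt_eq_toReal p Y g hp hg y, pE,
      ENNReal.toReal_ofReal (hp.1 x y)]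
  rw [tsum_congr h1, ← ENNReal.tsum_toReal_eq fun y =>
    ENNReal.mul_ne_top (pE_ne_top p x y) (HE_ne_top p Y g hp hrec hgC y),
    key_ennreal p Y g x, ENNReal.tsum_toReal_eq fun y =>
    ENNReal.mul_ne_top (qE_ne_top p Y hp x y) ENNReal.ofReal_ne_top]
  exact tsum_congr fun y => by
    rw [ENNReal.toReal_mul, qE_toReal p Y hp, ENNReal.toReal_ofReal (hg y)]

lemma harmonicExt_nonneg (hp : IsMarkov p) (hg : ∀ y, 0 ≤ g y) (x : X) :
    0 ≤ harmonicExt p Y g x := by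
  rw [harmonicExt_eq_toReal p Y g hp hg x]; exact ENNReal.toReal_nonneg

lemma harmonicExt_le (hp : IsMarkov p) (hrec : RecurrentSet p Y) (hg : ∀ y, 0 ≤ g y)
    {C' : ℝ} (hgC : ∀ y ∈ Y, g y ≤ C') (hC' : 0 ≤ C') (x : X) :
    harmonicExt p Y g x ≤ C' := by
  rw [harmonicExt_eq_toReal p Y g hp hg x]
  calc (HE p Y g x).toReal ≤ (ENNReal.ofReal C').toReal :=
        ENNReal.toReal_mono ENNReal.ofReal_ne_top (HE_le p Y g hp hrec hgC x)
    _ = C' := ENNReal.toReal_ofReal hC'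

end Nonneg

lemma summable_alpha (hp : IsMarkov p) (hrec : RecurrentSet p Y) (x : X) :
    Summable fun y => ∑' n, alphaHit p Y n x y := by
  have := ENNReal.summable_toReal (f := fun y => alE p Y x y)
    (by rw [alE_total p Y hp hrec x]; exact ENNReal.one_ne_top)
  simpa [alE_toReal p Y hp] using this

lemma summable_q (hp : IsMarkov p) (hrec : RecurrentSet p Y) (x : X) :
    Summable (inducedQ p Y x) := by
  have := ENNReal.summable_toReal (f := fun y => qE p Y x y)
    (by rw [qE_total p Y hp hrec x]; exact ENNReal.one_ne_top)
  simpa [qE_toReal p Y hp] using this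

lemma alpha_nonneg (hp : IsMarkov p) (x y : X) : 0 ≤ ∑' n, alphaHit p Y n x y := by
  rw [← alE_toReal p Y hp]; exact ENNReal.toReal_nonneg

lemma alpha_zero_right (hp : IsMarkov p) {y : X} (hy : y ∉ Y) (x : X) :
    (∑' n, alphaHit p Y n x y) = 0 := by
  rw [← alE_toReal p Y hp, alE_zero_right p Y hy]; simp

lemma q_nonneg (hp : IsMarkov p) (x y : X) : 0 ≤ inducedQ p Y x y := by
  rw [← qE_toReal p Y hp]; exact ENNReal.toReal_nonneg

lemma q_zero_right (hp : IsMarkov p) {y : X} (hy : y ∉ Y) (x : X) :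
    inducedQ p Y x y = 0 := by
  rw [← qE_toReal p Y hp, qE_zero_right p Y hy]; simp

lemma alpha_eq_q (hp : IsMarkov p) {x : X} (hx : x ∉ Y) (y : X) :
    (∑' n, alphaHit p Y n x y) = inducedQ p Y x y := by
  rw [← alE_toReal p Y hp, alE_not_mem p Y hx, qE_toReal p Y hp]

lemma summable_mul_of_bdd {a u : X → ℝ} {D : ℝ} (ha : Summable a)
    (ha0 : ∀ y, 0 ≤ a y) (haY : ∀ y ∉ Y, a y = 0) (hu : ∀ y ∈ Y, |u y| ≤ D) :
    Summable fun y => a y * u y := by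
  refine Summable.of_norm_bounded (ha.mul_right D) fun y => ?_
  by_cases hy : y ∈ Y
  · rw [Real.norm_eq_abs, abs_mul, abs_of_nonneg (ha0 y)]
    exact mul_le_mul_of_nonneg_left (hu y hy) (ha0 y)
  · simp [haY y hy]

end HarmAux


set_option maxHeartbeats 1000000 in
theorem HarmAux.main_extension
    [Countable X] (p : X → X → ℝ) (hp : IsMarkov p)
    (Y : Set X) (hrec : RecurrentSet p Y)
    (h : X → ℝ) (C : ℝ) (hbdd : ∀ y ∈ Y, |h y| ≤ C)
    (hharm : ∀ x ∈ Y, h x = ∑' y, inducedQ p Y x y * h y) :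
    (∀ x ∈ Y, harmonicExt p Y h x = h x) ∧
    (∀ x, |harmonicExt p Y h x| ≤ C) ∧
    (∀ x, harmonicExt p Y h x = ∑' y, p x y * harmonicExt p Y h y) := by
  -- Part 1: extension property
  have hext : ∀ x ∈ Y, harmonicExt p Y h x = h x := by
    intro x hx
    have hα : ∀ y, (∑' n, alphaHit p Y n x y) = if x = y ∧ x ∈ Y then 1 else 0 := by
      intro y
      have hz : ∀ n : ℕ, n ≠ 0 → alphaHit p Y n x y = 0 := by
        intro n hn
        match n with
        | 0 => exact absurd rfl hn
        | m + 1 => rw [alphaHit, if_pos hx]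
      rw [tsum_eq_single 0 hz, alphaHit]
    rw [harmonicExt]
    calc ∑' y, (∑' n, alphaHit p Y n x y) * h y
        = ∑' y, (if x = y ∧ x ∈ Y then (1:ℝ) else 0) * h y :=
          tsum_congr fun y => by rw [hα y]
      _ = (if x = x ∧ x ∈ Y then (1:ℝ) else 0) * h x := by
          refine tsum_eq_single x fun y hy => ?_
          rw [if_neg, zero_mul]
          rintro ⟨rfl, -⟩; exact hy rfl
      _ = h x := by rw [if_pos ⟨rfl, hx⟩, one_mul]
  -- Part 2: boundedness
  have hbound : ∀ x, |harmonicExt p Y h x| ≤ C := by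
    intro x
    have hSα := summable_alpha p Y hp hrec x
    have hb1 : ∀ y, |(∑' n, alphaHit p Y n x y) * h y|
        ≤ (∑' n, alphaHit p Y n x y) * C := by
      intro y
      by_cases hy : y ∈ Y
      · rw [abs_mul, abs_of_nonneg (alpha_nonneg p Y hp x y)]
        exact mul_le_mul_of_nonneg_left (hbdd y hy) (alpha_nonneg p Y hp x y)
      · simp [alpha_zero_right p Y hp hy x]
    have hS2 : Summable fun y => (∑' n, alphaHit p Y n x y) * C := hSα.mul_right C
    have hS1 : Summable fun y => |(∑' n, alphaHit p Y n x y) * h y| :=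
      Summable.of_nonneg_of_le (fun y => abs_nonneg _) hb1 hS2
    calc |harmonicExt p Y h x|
        ≤ ∑' y, |(∑' n, alphaHit p Y n x y) * h y| := by
          rw [harmonicExt]
          simpa only [Real.norm_eq_abs] using norm_tsum_le_tsum_norm
            (f := fun y => (∑' n, alphaHit p Y n x y) * h y)
            (by simpa only [Real.norm_eq_abs] using hS1)
      _ ≤ ∑' y, (∑' n, alphaHit p Y n x y) * C := Summable.tsum_le_tsum hb1 hS1 hS2
      _ = C := by rw [tsum_mul_right, hrec x, one_mul]
  refine ⟨hext, hbound, ?_⟩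
  -- Part 3: harmonicity
  intro x
  set hP : X → ℝ := fun y => max (h y) 0 with hPdef
  set hM : X → ℝ := fun y => max (-h y) 0 with hMdef
  have hPnn : ∀ y, 0 ≤ hP y := fun y => le_max_right _ _
  have hMnn : ∀ y, 0 ≤ hM y := fun y => le_max_right _ _
  have hCm : (0:ℝ) ≤ max C 0 := le_max_right _ _
  have hPbd : ∀ y ∈ Y, hP y ≤ max C 0 := fun y hy =>
    max_le_max ((le_abs_self _).trans (hbdd y hy)) le_rfl
  have hMbd : ∀ y ∈ Y, hM y ≤ max C 0 := fun y hy =>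
    max_le_max ((neg_le_abs (h y)).trans (hbdd y hy)) le_rfl
  have hPabs : ∀ y ∈ Y, |hP y| ≤ max C 0 := fun y hy => by
    rw [abs_of_nonneg (hPnn y)]; exact hPbd y hy
  have hMabs : ∀ y ∈ Y, |hM y| ≤ max C 0 := fun y hy => by
    rw [abs_of_nonneg (hMnn y)]; exact hMbd y hy
  have hdiff : ∀ y, h y = hP y - hM y := fun y =>
    (max_zero_sub_max_neg_zero_eq_self (h y)).symm
  -- splitting harmonicExt
  have hExtSplit : ∀ z, harmonicExt p Y h z
      = harmonicExt p Y hP z - harmonicExt p Y hM z := by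
    intro z
    have SP : Summable fun y => (∑' n, alphaHit p Y n z y) * hP y :=
      summable_mul_of_bdd Y (summable_alpha p Y hp hrec z) (alpha_nonneg p Y hp z)
        (fun y hy => alpha_zero_right p Y hp hy z) hPabs
    have SM : Summable fun y => (∑' n, alphaHit p Y n z y) * hM y :=
      summable_mul_of_bdd Y (summable_alpha p Y hp hrec z) (alpha_nonneg p Y hp z)
        (fun y hy => alpha_zero_right p Y hp hy z) hMabs
    rw [harmonicExt, harmonicExt, harmonicExt, ← Summable.tsum_sub SP SM]
    exact tsum_congr fun y => by
      rw [show h y = hP y - hM y from hdiff y, mul_sub]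
  -- splitting the Q-sum
  have hQSplit : ∑' y, inducedQ p Y x y * h y
      = (∑' y, inducedQ p Y x y * hP y) - ∑' y, inducedQ p Y x y * hM y := by
    have SP : Summable fun y => inducedQ p Y x y * hP y :=
      summable_mul_of_bdd Y (summable_q p Y hp hrec x) (q_nonneg p Y hp x)
        (fun y hy => q_zero_right p Y hp hy x) hPabs
    have SM : Summable fun y => inducedQ p Y x y * hM y :=
      summable_mul_of_bdd Y (summable_q p Y hp hrec x) (q_nonneg p Y hp x)
        (fun y hy => q_zero_right p Y hp hy x) hMabs
    rw [← Summable.tsum_sub SP SM]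
    exact tsum_congr fun y => by
      rw [show h y = hP y - hM y from hdiff y, mul_sub]
  -- splitting the P-sum
  have hPle : ∀ z, |harmonicExt p Y hP z| ≤ max C 0 := fun z => by
    rw [abs_of_nonneg (harmonicExt_nonneg p Y hP hp hPnn z)]
    exact harmonicExt_le p Y hP hp hrec hPnn hPbd hCm z
  have hMle : ∀ z, |harmonicExt p Y hM z| ≤ max C 0 := fun z => by
    rw [abs_of_nonneg (harmonicExt_nonneg p Y hM hp hMnn z)]
    exact harmonicExt_le p Y hM hp hrec hMnn hMbd hCm z
  have SPp : Summable fun y => p x y * harmonicExt p Y hP y :=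
    summable_mul_of_bdd (Set.univ) (hp.2 x).summable (hp.1 x)
      (fun y hy => absurd (Set.mem_univ y) hy) (fun y _ => hPle y)
  have SPm : Summable fun y => p x y * harmonicExt p Y hM y :=
    summable_mul_of_bdd (Set.univ) (hp.2 x).summable (hp.1 x)
      (fun y hy => absurd (Set.mem_univ y) hy) (fun y _ => hMle y)
  have hPSplit : ∑' y, p x y * harmonicExt p Y h y
      = (∑' y, p x y * harmonicExt p Y hP y) - ∑' y, p x y * harmonicExt p Y hM y := by
    rw [← Summable.tsum_sub SPp SPm]
    exact tsum_congr fun y => by rw [hExtSplit y, mul_sub]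
  have keyP := key_real p Y hP hp hrec hPnn hPbd x
  have keyM := key_real p Y hM hp hrec hMnn hMbd x
  have hmain : harmonicExt p Y h x = ∑' y, inducedQ p Y x y * h y := by
    by_cases hx : x ∈ Y
    · rw [hext x hx]; exact hharm x hx
    · rw [harmonicExt]
      exact tsum_congr fun y => by rw [alpha_eq_q p Y hp hx y]
  rw [hmain, hPSplit, keyP, keyM, hQSplit]

/-- If `h` is a bounded harmonic function for the induced chain `Q` on a
recurrent subset `Y`, then `h̃(x) = E_x[h(Z_{τ₀})]` is a bounded `P`-harmonic function on
`X` extending `h`, bounded by the same constant. -/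
theorem harmonic_extension_of_induced_harmonic
    [Countable X] (p : X → X → ℝ) (hp : IsMarkov p)
    (Y : Set X) (hrec : RecurrentSet p Y)
    (h : X → ℝ) (C : ℝ) (hbdd : ∀ y ∈ Y, |h y| ≤ C)
    (hharm : ∀ x ∈ Y, h x = ∑' y, inducedQ p Y x y * h y) :
    (∀ x ∈ Y, harmonicExt p Y h x = h x) ∧
    (∀ x, |harmonicExt p Y h x| ≤ C) ∧
    (∀ x, harmonicExt p Y h x = ∑' y, p x y * harmonicExt p Y h y) :=
  HarmAux.main_extension p hp Y hrec h C hbdd hharm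

end
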